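/- arXiv:1201.2502 — 4 statements merged into one kernel-verified Lean document; each statement's English description precedes it below -/
import Mathlib

section
/- There exists a continuous function f : ℝ → ℝ taking values in [−1, 1] such that: (i) for every real X, ∫₀^X f(x) dx + f(0) = f(X/2); (ii) for every natural number n, f(2n+1) = u_n and f(2n) = 0; (iii) f(x) = 0 for every real x < 0; and (iv) |f(x)| = |f(x+2)| for every real x > 0. -/
open MeasureTheory Filter intervalIntegral

noncomputable section ThueMorseFabius

namespace TMF

/-- tent function: length of `[2x-1,2x] ∩ [0,1]`. -/
def psi (x : ℝ) : ℝ := max 0 (min (2*x) (2 - 2*x))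

lemma psi_nonneg (x : ℝ) : 0 ≤ psi x := le_max_left _ _

lemma psi_le_one (x : ℝ) : psi x ≤ 1 := by
  unfold psi
  rcases le_total x (1/2) with h | h
  · rcases le_total (min (2*x) (2-2*x)) 0 with h0 | h0
    · simpa [max_eq_left h0]
    · rw [max_eq_right h0]
      exact (min_le_left _ _).trans (by linarith)
  · rcases le_total (min (2*x) (2-2*x)) 0 with h0 | h0
    · simpa [max_eq_left h0]
    · rw [max_eq_right h0]
      exact (min_le_right _ _).trans (by linarith)

lemma psi_continuous : Continuous psi :=
  continuous_const.max ((continuous_const.mul continuous_id).min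
    (continuous_const.sub (continuous_const.mul continuous_id)))

lemma psi_eq_of_nonpos {x : ℝ} (h : x ≤ 0) : psi x = 0 :=
  max_eq_left (by simp only [min_le_iff]; left; linarith)

lemma psi_eq_of_one_le {x : ℝ} (h : 1 ≤ x) : psi x = 0 :=
  max_eq_left (by simp only [min_le_iff]; right; linarith)

/-- The iteration whose limit is the Fabius-type CDF. -/
def Fs : ℕ → ℝ → ℝ
  | 0 => fun x => max 0 (min x 1)
  | (k+1) => fun x => ∫ t in (2*x-1)..(2*x), Fs k t

lemma Fs_succ (k : ℕ) (x : ℝ) : Fs (k+1) x = ∫ t in (2*x-1)..(2*x), Fs k t := rfl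

lemma Fs_continuous : ∀ k, Continuous (Fs k) := by
  intro k
  induction k with
  | zero => exact continuous_const.max (continuous_id.min continuous_const)
  | succ k ih =>
      have h1 : Continuous fun y : ℝ => ∫ t in (0:ℝ)..y, Fs k t := by
        exact intervalIntegral.continuous_primitive (μ := volume)
          (fun a b => ih.intervalIntegrable a b) 0
      have : Continuous fun x : ℝ => (∫ t in (0:ℝ)..(2*x), Fs k t)
          - ∫ t in (0:ℝ)..(2*x-1), Fs k t :=
        (h1.comp (continuous_const.mul continuous_id)).sub
          (h1.comp ((continuous_const.mul continuous_id).sub continuous_const))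
      apply this.congr
      intro x
      rw [Fs_succ]
      exact (intervalIntegral.integral_interval_sub_left (μ := volume)
        (ih.intervalIntegrable _ _) (ih.intervalIntegrable _ _))

lemma Fs_nonneg : ∀ k x, 0 ≤ Fs k x := by
  intro k
  induction k with
  | zero => intro x; exact le_max_left _ _
  | succ k ih =>
      intro x
      rw [Fs_succ]
      apply intervalIntegral.integral_nonneg (by linarith)
      intro t _; exact ih t

lemma Fs_le_one : ∀ k x, Fs k x ≤ 1 := by
  intro k
  induction k with
  | zero =>
      intro x
      apply max_le (by norm_num) (min_le_right _ _)
  | succ k ih =>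
      intro x
      rw [Fs_succ]
      calc (∫ t in (2*x-1)..(2*x), Fs k t) ≤ ∫ _t in (2*x-1)..(2*x), (1:ℝ) := by
            apply intervalIntegral.integral_mono_on (by linarith)
              (((Fs_continuous k).intervalIntegrable _ _)) (intervalIntegrable_const)
            intro t _; exact ih t
        _ = 1 := by simp

lemma Fs_eq_zero : ∀ k, ∀ x ≤ (0:ℝ), Fs k x = 0 := by
  intro k
  induction k with
  | zero =>
      intro x hx
      exact max_eq_left (by simp only [min_le_iff]; left; exact hx)
  | succ k ih =>
      intro x hx
      rw [Fs_succ]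
      rw [intervalIntegral.integral_congr (g := fun _ => (0:ℝ)) ?_]
      · simp
      · intro t ht
        rw [Set.uIcc_of_le (by linarith)] at ht
        exact ih t (by rcases ht with ⟨_, h2⟩; linarith)

lemma Fs_eq_one : ∀ k, ∀ x : ℝ, 1 ≤ x → Fs k x = 1 := by
  intro k
  induction k with
  | zero =>
      intro x hx
      show max (0:ℝ) (min x 1) = 1
      rw [min_eq_right hx]
      exact max_eq_right (by norm_num)
  | succ k ih =>
      intro x hx
      rw [Fs_succ]
      rw [intervalIntegral.integral_congr (g := fun _ => (1:ℝ)) ?_]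
      · simp
      · intro t ht
        rw [Set.uIcc_of_le (by linarith)] at ht
        exact ih t (by rcases ht with ⟨h1, _⟩; linarith)


/-- L1: constant bound improves to a `psi`-shaped bound. -/
lemma step_psi {D : ℝ → ℝ} (hD : Continuous D) (h0 : ∀ t ≤ (0:ℝ), D t = 0)
    (h1 : ∀ t : ℝ, 1 ≤ t → D t = 0) {c : ℝ} (hc : 0 ≤ c) (hb : ∀ t, |D t| ≤ c)
    (x : ℝ) : |∫ t in (2*x-1)..(2*x), D t| ≤ c * psi x := by
  rcases le_or_gt (2*x) 0 with hx0 | hx0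
  · have : (∫ t in (2*x-1)..(2*x), D t) = 0 := by
      rw [intervalIntegral.integral_congr (g := fun _ => (0:ℝ)) ?_]
      · simp
      · intro t ht
        rw [Set.uIcc_of_le (by linarith)] at ht
        exact h0 t (le_trans ht.2 hx0)
    rw [this]
    simpa using mul_nonneg hc (psi_nonneg x)
  rcases le_or_gt 1 (2*x-1) with hx1 | hx1
  · have : (∫ t in (2*x-1)..(2*x), D t) = 0 := by
      rw [intervalIntegral.integral_congr (g := fun _ => (0:ℝ)) ?_]
      · simp
      · intro t ht
        rw [Set.uIcc_of_le (by linarith)] at ht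
        exact h1 t (le_trans hx1 ht.1)
    rw [this]
    simpa using mul_nonneg hc (psi_nonneg x)
  -- main case : 0 < 2x and 2x-1 < 1
  set c₁ : ℝ := max (2*x-1) 0 with hc₁
  set d₁ : ℝ := min (2*x) 1 with hd₁
  have hcd : c₁ ≤ d₁ := by
    apply max_le <;> apply le_min <;> linarith
  have e1 : (∫ t in (2*x-1)..(2*x), D t)
      = (∫ t in (2*x-1)..c₁, D t) + ((∫ t in c₁..d₁, D t) + (∫ t in d₁..(2*x), D t)) := by
    rw [intervalIntegral.integral_add_adjacent_intervals (hD.intervalIntegrable _ _)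
      (hD.intervalIntegrable _ _),
      intervalIntegral.integral_add_adjacent_intervals (hD.intervalIntegrable _ _)
      (hD.intervalIntegrable _ _)]
  have z1 : (∫ t in (2*x-1)..c₁, D t) = 0 := by
    rcases le_total (2*x-1) 0 with h | h
    · rw [hc₁, max_eq_right h]
      rw [intervalIntegral.integral_congr (g := fun _ => (0:ℝ)) ?_]
      · simp
      · intro t ht
        rw [Set.uIcc_of_le h] at ht
        exact h0 t ht.2
    · rw [hc₁, max_eq_left h, intervalIntegral.integral_same]
  have z2 : (∫ t in d₁..(2*x), D t) = 0 := by
    rcases le_total 1 (2*x) with h | h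
    · rw [hd₁, min_eq_right h]
      rw [intervalIntegral.integral_congr (g := fun _ => (0:ℝ)) ?_]
      · simp
      · intro t ht
        rw [Set.uIcc_of_le h] at ht
        exact h1 t ht.1
    · rw [hd₁, min_eq_left h, intervalIntegral.integral_same]
  have hmid : |∫ t in c₁..d₁, D t| ≤ c * (d₁ - c₁) := by
    have := intervalIntegral.norm_integral_le_of_norm_le_const
      (f := D) (a := c₁) (b := d₁) (C := c) (fun t _ => hb t)
    rwa [Real.norm_eq_abs, abs_of_nonneg (by linarith : (0:ℝ) ≤ d₁ - c₁)] at this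
  have hlen : d₁ - c₁ ≤ psi x := by
    have h2 : 0 < 2 - 2*x := by linarith
    have : min (2*x) (2-2*x) ≥ 0 := le_min (by linarith) (by linarith)
    rw [psi, max_eq_right this]
    rcases le_total (2*x) (2-2*x) with h | h
    · rw [min_eq_left h]
      have : c₁ ≥ 0 := le_max_right _ _
      have : d₁ ≤ 2*x := min_le_left _ _
      linarith [le_max_right (2*x-1) (0:ℝ), min_le_left (2*x) (1:ℝ)]
    · rw [min_eq_right h]
      linarith [le_max_left (2*x-1) (0:ℝ), min_le_right (2*x) (1:ℝ)]
  calc |∫ t in (2*x-1)..(2*x), D t| = |∫ t in c₁..d₁, D t| := by rw [e1, z1, z2]; ring_nf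
    _ ≤ c * (d₁ - c₁) := hmid
    _ ≤ c * psi x := by
        apply mul_le_mul_of_nonneg_left hlen hc

lemma integral_psi_le (a : ℝ) : (∫ t in a..(a+1), psi t) ≤ 1/2 := by
  have hint : IntervalIntegrable psi volume (min a 0) (max (a+1) 1) :=
    psi_continuous.intervalIntegrable _ _
  have h1 : (∫ t in a..(a+1), psi t) ≤ ∫ t in (min a 0)..(max (a+1) 1), psi t := by
    apply intervalIntegral.integral_mono_interval (min_le_left _ _) (by linarith)
      (le_max_left _ _)
    · filter_upwards with t using psi_nonneg t
    · exact hint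
  have h2 : (∫ t in (min a 0)..(max (a+1) 1), psi t)
      = (∫ t in (min a 0)..(0:ℝ), psi t) + ((∫ t in (0:ℝ)..(1:ℝ), psi t)
        + ∫ t in (1:ℝ)..(max (a+1) 1), psi t) := by
    rw [intervalIntegral.integral_add_adjacent_intervals
        (psi_continuous.intervalIntegrable _ _) (psi_continuous.intervalIntegrable _ _),
      intervalIntegral.integral_add_adjacent_intervals
        (psi_continuous.intervalIntegrable _ _) (psi_continuous.intervalIntegrable _ _)]
  have z1 : (∫ t in (min a 0)..(0:ℝ), psi t) = 0 := by
    rw [intervalIntegral.integral_congr (g := fun _ => (0:ℝ)) ?_]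
    · simp
    · intro t ht
      rw [Set.uIcc_of_le (min_le_right a 0)] at ht
      exact psi_eq_of_nonpos ht.2
  have z2 : (∫ t in (1:ℝ)..(max (a+1) 1), psi t) = 0 := by
    rw [intervalIntegral.integral_congr (g := fun _ => (0:ℝ)) ?_]
    · simp
    · intro t ht
      rw [Set.uIcc_of_le (le_max_right (a+1) 1)] at ht
      exact psi_eq_of_one_le ht.1
  have hmidval : (∫ t in (0:ℝ)..(1:ℝ), psi t) = 1/2 := by
    have e : (∫ t in (0:ℝ)..(1:ℝ), psi t)
        = (∫ t in (0:ℝ)..(1/2:ℝ), psi t) + ∫ t in (1/2:ℝ)..(1:ℝ), psi t := by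
      rw [intervalIntegral.integral_add_adjacent_intervals
        (psi_continuous.intervalIntegrable _ _) (psi_continuous.intervalIntegrable _ _)]
    have i1 : (∫ t in (0:ℝ)..(1/2:ℝ), psi t) = ∫ t in (0:ℝ)..(1/2:ℝ), 2*t := by
      apply intervalIntegral.integral_congr
      intro t ht
      rw [Set.uIcc_of_le (by norm_num)] at ht
      rw [psi, min_eq_left (by linarith [ht.1, ht.2]), max_eq_right (by linarith [ht.1])]
    have i2 : (∫ t in (1/2:ℝ)..(1:ℝ), psi t) = ∫ t in (1/2:ℝ)..(1:ℝ), (2 - 2*t) := by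
      apply intervalIntegral.integral_congr
      intro t ht
      rw [Set.uIcc_of_le (by norm_num)] at ht
      rw [psi, min_eq_right (by linarith [ht.1, ht.2]), max_eq_right (by linarith [ht.2])]
    have i3 : (∫ t in (1/2:ℝ)..(1:ℝ), (2 - 2*t))
        = (∫ _t in (1/2:ℝ)..(1:ℝ), (2:ℝ)) - ∫ t in (1/2:ℝ)..(1:ℝ), 2*t :=
      intervalIntegral.integral_sub intervalIntegrable_const
        (Continuous.intervalIntegrable (by continuity) _ _)
    rw [e, i1, i2, i3, intervalIntegral.integral_const,
      intervalIntegral.integral_const_mul, intervalIntegral.integral_const_mul,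
      integral_id, integral_id]
    norm_num
  calc (∫ t in a..(a+1), psi t) ≤ _ := h1
    _ = 1/2 := by rw [h2, z1, z2, hmidval]; ring

/-- L2: a `psi`-shaped bound improves to half the constant. -/
lemma step_half {D : ℝ → ℝ} (hD : Continuous D) {c : ℝ} (hc : 0 ≤ c)
    (hb : ∀ t, |D t| ≤ c * psi t) (x : ℝ) :
    |∫ t in (2*x-1)..(2*x), D t| ≤ c / 2 := by
  have h1 : |∫ t in (2*x-1)..(2*x), D t| ≤ ∫ t in (2*x-1)..(2*x), |D t| := by
    have := intervalIntegral.norm_integral_le_integral_norm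
      (f := D) (a := 2*x-1) (b := 2*x) (μ := volume) (by linarith)
    simpa [Real.norm_eq_abs] using this
  have h2 : (∫ t in (2*x-1)..(2*x), |D t|) ≤ ∫ t in (2*x-1)..(2*x), c * psi t := by
    apply intervalIntegral.integral_mono_on (by linarith)
      (hD.abs.intervalIntegrable _ _)
      ((continuous_const.mul psi_continuous).intervalIntegrable _ _)
    intro t _; exact hb t
  have h3 : (∫ t in (2*x-1)..(2*x), c * psi t) ≤ c / 2 := by
    rw [intervalIntegral.integral_const_mul]
    have := integral_psi_le (2*x-1)
    have harg : 2*x - 1 + 1 = 2*x := by ring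
    rw [harg] at this
    calc c * ∫ t in (2*x-1)..(2*x), psi t ≤ c * (1/2) :=
          mul_le_mul_of_nonneg_left this hc
      _ = c / 2 := by ring
  linarith


lemma Fs_diff_bound : ∀ m : ℕ, (∀ x, |Fs (2*m+1) x - Fs (2*m) x| ≤ (1/2)^m) ∧
    (∀ x, |Fs (2*m+2) x - Fs (2*m+1) x| ≤ (1/2)^m * psi x) := by
  intro m
  induction m with
  | zero =>
      constructor
      · intro x
        simp only [pow_zero]
        have h1 := Fs_nonneg 1 x
        have h2 := Fs_le_one 1 x
        have h3 := Fs_nonneg 0 x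
        have h4 := Fs_le_one 0 x
        rw [abs_le]; constructor <;> [skip; skip] <;> norm_num <;> linarith
      · intro x
        simp only [pow_zero, one_mul]
        have hD : Continuous fun t => Fs 1 t - Fs 0 t :=
          (Fs_continuous 1).sub (Fs_continuous 0)
        have h0 : ∀ t ≤ (0:ℝ), Fs 1 t - Fs 0 t = 0 := fun t ht => by
          rw [Fs_eq_zero 1 t ht, Fs_eq_zero 0 t ht, sub_zero]
        have h1 : ∀ t : ℝ, 1 ≤ t → Fs 1 t - Fs 0 t = 0 := fun t ht => by
          rw [Fs_eq_one 1 t ht, Fs_eq_one 0 t ht]; norm_num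
        have hb : ∀ t, |Fs 1 t - Fs 0 t| ≤ 1 := by
          intro t
          have h1 := Fs_nonneg 1 t
          have h2 := Fs_le_one 1 t
          have h3 := Fs_nonneg 0 t
          have h4 := Fs_le_one 0 t
          rw [abs_le]; constructor <;> linarith
        have := step_psi hD h0 h1 (by norm_num) hb x
        calc |Fs 2 x - Fs 1 x| = |∫ t in (2*x-1)..(2*x), (Fs 1 t - Fs 0 t)| := by
              rw [intervalIntegral.integral_sub ((Fs_continuous 1).intervalIntegrable _ _)
                ((Fs_continuous 0).intervalIntegrable _ _)]
              rfl
          _ ≤ 1 * psi x := this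
          _ = psi x := one_mul _
  | succ m ih =>
      have hDcont : Continuous fun t => Fs (2*m+2) t - Fs (2*m+1) t :=
        (Fs_continuous _).sub (Fs_continuous _)
      have hpow : (0:ℝ) ≤ (1/2)^m := by positivity
      have key1 : ∀ x, |Fs (2*m+3) x - Fs (2*m+2) x| ≤ (1/2)^(m+1) := by
        intro x
        have := step_half hDcont hpow ih.2 x
        calc |Fs (2*m+3) x - Fs (2*m+2) x|
            = |∫ t in (2*x-1)..(2*x), (Fs (2*m+2) t - Fs (2*m+1) t)| := by
              rw [intervalIntegral.integral_sub ((Fs_continuous _).intervalIntegrable _ _)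
                ((Fs_continuous _).intervalIntegrable _ _)]
              rfl
          _ ≤ (1/2)^m / 2 := this
          _ = (1/2)^(m+1) := by ring
      constructor
      · intro x
        have := key1 x
        have e1 : 2*(m+1)+1 = 2*m+3 := by ring
        have e2 : 2*(m+1) = 2*m+2 := by ring
        rw [e1, e2]
        exact this
      · intro x
        have hDcont' : Continuous fun t => Fs (2*m+3) t - Fs (2*m+2) t :=
          (Fs_continuous _).sub (Fs_continuous _)
        have h0 : ∀ t ≤ (0:ℝ), Fs (2*m+3) t - Fs (2*m+2) t = 0 := fun t ht => by
          rw [Fs_eq_zero _ t ht, Fs_eq_zero _ t ht, sub_zero]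
        have h1 : ∀ t : ℝ, 1 ≤ t → Fs (2*m+3) t - Fs (2*m+2) t = 0 := fun t ht => by
          rw [Fs_eq_one _ t ht, Fs_eq_one _ t ht]; norm_num
        have := step_psi hDcont' h0 h1 (by positivity) key1 x
        have e1 : 2*(m+1)+2 = 2*m+4 := by ring
        have e2 : 2*(m+1)+1 = 2*m+3 := by ring
        rw [e1, e2]
        calc |Fs (2*m+4) x - Fs (2*m+3) x|
            = |∫ t in (2*x-1)..(2*x), (Fs (2*m+3) t - Fs (2*m+2) t)| := by
              rw [intervalIntegral.integral_sub ((Fs_continuous _).intervalIntegrable _ _)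
                ((Fs_continuous _).intervalIntegrable _ _)]
              rfl
          _ ≤ (1/2)^(m+1) * psi x := this

/-- geometric-type one-step bound with ratio `r = (√2)⁻¹`. -/
def rr : ℝ := (Real.sqrt 2)⁻¹

lemma rr_pos : 0 < rr := inv_pos.mpr (Real.sqrt_pos.mpr (by norm_num))

lemma rr_lt_one : rr < 1 := by
  rw [rr]
  rw [inv_lt_one_iff₀]
  right
  rw [show (1:ℝ) = Real.sqrt 1 by simp]
  exact Real.sqrt_lt_sqrt (by norm_num) (by norm_num)

lemma rr_sq : rr^2 = 1/2 := by
  rw [rr, ← one_div, div_pow, one_pow, Real.sq_sqrt (by norm_num : (0:ℝ) ≤ 2)]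

lemma Fs_step_bound (k : ℕ) (x : ℝ) : dist (Fs k x) (Fs (k+1) x) ≤ 2 * rr ^ k := by
  have hhalf : ∀ m : ℕ, ((1:ℝ)/2)^m = rr^(2*m) := by
    intro m
    rw [pow_mul, rr_sq]
  rcases Nat.even_or_odd k with ⟨m, hm⟩ | ⟨m, hm⟩
  · subst hm
    rw [Real.dist_eq, abs_sub_comm]
    have e : m + m = 2*m := by ring
    rw [e]
    calc |Fs (2*m+1) x - Fs (2*m) x| ≤ (1/2)^m := (Fs_diff_bound m).1 x
      _ = rr^(2*m) := hhalf m
      _ ≤ 2 * rr^(2*m) := by nlinarith [pow_pos rr_pos (2*m)]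
  · subst hm
    rw [Real.dist_eq, abs_sub_comm]
    have e : 2*m+1+1 = 2*m+2 := by ring
    rw [e]
    calc |Fs (2*m+2) x - Fs (2*m+1) x| ≤ (1/2)^m * psi x := (Fs_diff_bound m).2 x
      _ ≤ (1/2)^m * 1 := by
          apply mul_le_mul_of_nonneg_left (psi_le_one x) (by positivity)
      _ = rr^(2*m) * 1 := by rw [hhalf m]
      _ ≤ 2 * rr^(2*m+1) := by
          have h2rr : 1 ≤ 2 * rr := by
            rw [rr, mul_comm, inv_mul_eq_div, le_div_iff₀ (Real.sqrt_pos.mpr (by norm_num)),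
              one_mul]
            nlinarith [Real.sq_sqrt (by norm_num : (0:ℝ) ≤ 2), Real.sqrt_nonneg 2]
          have hp : 0 < rr^(2*m) := pow_pos rr_pos _
          rw [mul_one, pow_succ]
          nlinarith

lemma Fs_cauchy (x : ℝ) : CauchySeq (fun k => Fs k x) :=
  cauchySeq_of_le_geometric rr 2 rr_lt_one (fun k => Fs_step_bound k x)

/-- The limiting Fabius-type CDF. -/
def FL (x : ℝ) : ℝ := (cauchySeq_tendsto_of_complete (Fs_cauchy x)).choose

lemma FL_tendsto (x : ℝ) : Tendsto (fun k => Fs k x) atTop (nhds (FL x)) :=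
  (cauchySeq_tendsto_of_complete (Fs_cauchy x)).choose_spec

lemma FL_dist (k : ℕ) (x : ℝ) : dist (Fs k x) (FL x) ≤ 2 * rr ^ k / (1 - rr) :=
  dist_le_of_le_geometric_of_tendsto rr 2 rr_lt_one
    (fun k => Fs_step_bound k x) (FL_tendsto x) k

lemma FL_bound_tendsto : Tendsto (fun k : ℕ => 2 * rr ^ k / (1 - rr)) atTop (nhds 0) := by
  have h := tendsto_pow_atTop_nhds_zero_of_lt_one (le_of_lt rr_pos) rr_lt_one
  have := (h.const_mul 2).div_const (1 - rr)
  simpa using this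


lemma FL_uniform : TendstoUniformly (fun k x => Fs k x) FL atTop := by
  rw [Metric.tendstoUniformly_iff]
  intro ε hε
  have := FL_bound_tendsto
  rw [Metric.tendsto_atTop] at this
  obtain ⟨N, hN⟩ := this ε hε
  filter_upwards [Filter.eventually_ge_atTop N] with k hk x
  have h1 := FL_dist k x
  have h2 := hN k hk
  rw [Real.dist_eq, sub_zero] at h2
  have h3 : 2 * rr ^ k / (1 - rr) ≤ |2 * rr ^ k / (1 - rr)| := le_abs_self _
  rw [dist_comm]
  calc dist (Fs k x) (FL x) ≤ 2 * rr ^ k / (1 - rr) := h1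
    _ ≤ |2 * rr ^ k / (1 - rr)| := h3
    _ < ε := h2

lemma FL_continuous : Continuous FL :=
  FL_uniform.continuous (Filter.Frequently.of_forall Fs_continuous)

lemma FL_nonneg (x : ℝ) : 0 ≤ FL x :=
  le_of_tendsto_of_tendsto' tendsto_const_nhds (FL_tendsto x) (fun k => Fs_nonneg k x)

lemma FL_le_one (x : ℝ) : FL x ≤ 1 :=
  le_of_tendsto_of_tendsto' (FL_tendsto x) tendsto_const_nhds (fun k => Fs_le_one k x)

lemma FL_eq_zero {x : ℝ} (hx : x ≤ 0) : FL x = 0 := by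
  have h : Tendsto (fun k : ℕ => Fs k x) atTop (nhds 0) := by
    have : (fun k : ℕ => Fs k x) = fun _ => (0:ℝ) := funext fun k => Fs_eq_zero k x hx
    rw [this]; exact tendsto_const_nhds
  exact tendsto_nhds_unique (FL_tendsto x) h

lemma FL_eq_one {x : ℝ} (hx : 1 ≤ x) : FL x = 1 := by
  have h : Tendsto (fun k : ℕ => Fs k x) atTop (nhds 1) := by
    have : (fun k : ℕ => Fs k x) = fun _ => (1:ℝ) := funext fun k => Fs_eq_one k x hx
    rw [this]; exact tendsto_const_nhds
  exact tendsto_nhds_unique (FL_tendsto x) h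

lemma FL_fixed (x : ℝ) : FL x = ∫ t in (2*x-1)..(2*x), FL t := by
  have h1 : Tendsto (fun k : ℕ => Fs (k+1) x) atTop (nhds (FL x)) :=
    (FL_tendsto x).comp (tendsto_add_atTop_nat 1)
  have h2 : Tendsto (fun k : ℕ => Fs (k+1) x) atTop
      (nhds (∫ t in (2*x-1)..(2*x), FL t)) := by
    rw [tendsto_iff_dist_tendsto_zero]
    apply squeeze_zero (fun k => dist_nonneg)
      (g := fun k : ℕ => 2 * rr ^ k / (1 - rr))
    · intro k
      rw [Fs_succ, Real.dist_eq]
      have : (∫ t in (2*x-1)..(2*x), Fs k t) - (∫ t in (2*x-1)..(2*x), FL t)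
          = ∫ t in (2*x-1)..(2*x), (Fs k t - FL t) := by
        rw [intervalIntegral.integral_sub ((Fs_continuous k).intervalIntegrable _ _)
          (FL_continuous.intervalIntegrable _ _)]
      rw [this]
      have hb := intervalIntegral.norm_integral_le_of_norm_le_const
        (f := fun t => Fs k t - FL t) (a := 2*x-1) (b := 2*x)
        (C := 2 * rr ^ k / (1 - rr)) ?_
      · rw [Real.norm_eq_abs] at hb
        calc |∫ t in (2*x-1)..(2*x), (Fs k t - FL t)|
            ≤ 2 * rr ^ k / (1 - rr) * |2*x - (2*x-1)| := hb
          _ = 2 * rr ^ k / (1 - rr) := by norm_num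
      · intro t _
        rw [Real.norm_eq_abs, ← Real.dist_eq]
        exact FL_dist k t
    · exact FL_bound_tendsto
  exact tendsto_nhds_unique h1 h2

lemma primitive_hasDerivAt {g : ℝ → ℝ} (hg : Continuous g) (y : ℝ) :
    HasDerivAt (fun t => ∫ s in (0:ℝ)..t, g s) (g y) y :=
  intervalIntegral.integral_hasDerivAt_right (hg.intervalIntegrable _ _)
    (hg.stronglyMeasurable.stronglyMeasurableAtFilter) hg.continuousAt

lemma FL_hasDerivAt (x : ℝ) :
    HasDerivAt FL (2 * FL (2*x) - 2 * FL (2*x-1)) x := by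
  have hG : ∀ y, FL y = (∫ t in (0:ℝ)..(2*y), FL t) - ∫ t in (0:ℝ)..(2*y-1), FL t := by
    intro y
    rw [FL_fixed y]
    rw [intervalIntegral.integral_interval_sub_left (μ := volume)
      (FL_continuous.intervalIntegrable _ _) (FL_continuous.intervalIntegrable _ _)]
  have hinner1 : HasDerivAt (fun y : ℝ => 2*y) 2 x := by
    simpa using (hasDerivAt_id x).const_mul 2
  have hinner2 : HasDerivAt (fun y : ℝ => 2*y-1) 2 x := hinner1.sub_const 1
  have h1 : HasDerivAt (fun y : ℝ => ∫ t in (0:ℝ)..(2*y), FL t) (FL (2*x) * 2) x :=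
    HasDerivAt.comp x (primitive_hasDerivAt FL_continuous (2*x)) hinner1
  have h2 : HasDerivAt (fun y : ℝ => ∫ t in (0:ℝ)..(2*y-1), FL t) (FL (2*x-1) * 2) x :=
    by have := HasDerivAt.comp x (primitive_hasDerivAt FL_continuous (2*x-1)) hinner2; exact this
  have h3 := h1.sub h2
  have heq : (fun y : ℝ => (∫ t in (0:ℝ)..(2*y), FL t) - ∫ t in (0:ℝ)..(2*y-1), FL t) = FL :=
    funext fun y => (hG y).symm
  rw [show ((fun y : ℝ => ∫ t in (0:ℝ)..(2*y), FL t) - fun y : ℝ => ∫ t in (0:ℝ)..(2*y-1), FL t) = FL from heq] at h3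
  refine h3.congr_deriv ?_
  ring



end TMF

/-- The ±1 Thue–Morse sequence: `u n = (-1)^(s₂(n)+1)` where `s₂` is the binary digit sum. -/
def u (n : ℕ) : ℤ := (-1) ^ ((Nat.digits 2 n).sum + 1)

namespace TMF







lemma u_zero : u 0 = -1 := by simp [u]

lemma u_two_mul (n : ℕ) : u (2*n) = u n := by
  rcases Nat.eq_zero_or_pos n with h | h
  · subst h; rfl
  · unfold u
    rw [Nat.digits_def' (by norm_num : 1 < 2) (by omega : 0 < 2*n)]
    have h1 : 2*n % 2 = 0 := by omega
    have h2 : 2*n / 2 = n := by omega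
    rw [h1, h2]
    simp

lemma u_two_mul_add_one (n : ℕ) : u (2*n+1) = -u n := by
  unfold u
  rw [Nat.digits_def' (by norm_num : 1 < 2) (by omega : 0 < 2*n+1)]
  have h1 : (2*n+1) % 2 = 1 := by omega
  have h2 : (2*n+1) / 2 = n := by omega
  rw [h1, h2, List.sum_cons]
  have e : 1 + (Nat.digits 2 n).sum + 1 = ((Nat.digits 2 n).sum + 1) + 1 := by ring
  rw [e, pow_succ]
  ring

lemma u_abs (n : ℕ) : |(u n : ℝ)| = 1 := by
  unfold u
  push_cast
  rw [abs_pow, abs_neg, abs_one, one_pow]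

/-- building block: `hfun n` is supported on `[2n, 2n+2]`. -/
def hfun (n : ℕ) (x : ℝ) : ℝ := FL (x - 2*n) - FL (x - 2*n - 1)

lemma hfun_continuous (n : ℕ) : Continuous (hfun n) :=
  (FL_continuous.comp (continuous_id.sub continuous_const)).sub
    (FL_continuous.comp ((continuous_id.sub continuous_const).sub continuous_const))

lemma hfun_zero_left {n : ℕ} {x : ℝ} (hx : x ≤ 2*n) : hfun n x = 0 := by
  rw [hfun, FL_eq_zero (by linarith), FL_eq_zero (by linarith), sub_zero]

lemma hfun_zero_right {n : ℕ} {x : ℝ} (hx : 2*n+2 ≤ x) : hfun n x = 0 := by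
  rw [hfun, FL_eq_one (by linarith), FL_eq_one (by linarith)]
  norm_num

lemma hfun_abs_le (n : ℕ) (x : ℝ) : |hfun n x| ≤ 1 := by
  rw [hfun, abs_le]
  constructor
  · linarith [FL_nonneg (x - 2*(n:ℝ)), FL_le_one (x - 2*(n:ℝ) - 1)]
  · linarith [FL_le_one (x - 2*(n:ℝ)), FL_nonneg (x - 2*(n:ℝ) - 1)]

/-- The solution function. -/
def f (x : ℝ) : ℝ := ∑' n : ℕ, (u n : ℝ) * hfun n x

lemma f_eq_single {n : ℕ} {x : ℝ} (h1 : 2*n ≤ x) (h2 : x ≤ 2*n+2) :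
    f x = (u n : ℝ) * hfun n x := by
  apply tsum_eq_single
  intro m hm
  rcases lt_or_gt_of_ne hm with hlt | hgt
  · have hm1 : (m:ℝ) + 1 ≤ n := by exact_mod_cast Nat.succ_le_of_lt hlt
    have : 2*(m:ℝ)+2 ≤ x := by linarith
    rw [hfun_zero_right this, mul_zero]
  · have hm1 : (n:ℝ) + 1 ≤ m := by exact_mod_cast Nat.succ_le_of_lt hgt
    have : x ≤ 2*(m:ℝ) := by linarith
    rw [hfun_zero_left this, mul_zero]

lemma f_eq_finsum (N : ℕ) (x : ℝ) (hx : x < 2*N) :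
    f x = ∑ n ∈ Finset.range N, (u n : ℝ) * hfun n x := by
  apply tsum_eq_sum
  intro m hm
  rw [Finset.mem_range, not_lt] at hm
  have : x ≤ 2*(m:ℝ) := by
    have : (N:ℝ) ≤ m := by exact_mod_cast hm
    linarith
  rw [hfun_zero_left this, mul_zero]

lemma f_nonpos_zero {x : ℝ} (hx : x ≤ 0) : f x = 0 := by
  rw [f]
  have : ∀ n : ℕ, (u n : ℝ) * hfun n x = 0 := by
    intro n
    have hxn : x ≤ 2*(n:ℝ) := le_trans hx (by positivity)
    rw [hfun_zero_left hxn, mul_zero]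
  rw [tsum_congr this, tsum_zero]

lemma two_le_cast (N : ℕ) (y : ℝ) (h : y < N) : y < 2*N := by
  have : (N:ℝ) ≤ 2*N := by
    have : (0:ℝ) ≤ N := Nat.cast_nonneg N
    linarith
  linarith

lemma f_eventually_eq {y : ℝ} {N : ℕ} (hy : y < 2*(N:ℝ)) :
    f =ᶠ[nhds y] fun x => ∑ n ∈ Finset.range N, (u n : ℝ) * hfun n x := by
  filter_upwards [Iio_mem_nhds hy] with x hx
  exact f_eq_finsum N x hx

lemma f_continuous : Continuous f := by
  rw [continuous_iff_continuousAt]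
  intro y
  obtain ⟨N, hN⟩ := exists_nat_gt y
  have hy : y < 2*(N:ℝ) := two_le_cast N y hN
  have hc : Continuous fun x => ∑ n ∈ Finset.range N, (u n : ℝ) * hfun n x :=
    continuous_finset_sum _ (fun n _ => continuous_const.mul (hfun_continuous n))
  exact ContinuousAt.congr hc.continuousAt (f_eventually_eq hy).symm

lemma hfun_hasDerivAt (n : ℕ) (y : ℝ) :
    HasDerivAt (hfun n) (2 * hfun (2*n) (2*y) - 2 * hfun (2*n+1) (2*y)) y := by
  have h1 : HasDerivAt (fun x : ℝ => x - 2*(n:ℝ)) 1 y := (hasDerivAt_id y).sub_const _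
  have h2 : HasDerivAt (fun x : ℝ => x - 2*(n:ℝ) - 1) 1 y := h1.sub_const 1
  have g1 := ((FL_hasDerivAt (y - 2*(n:ℝ))).comp y h1).sub
    ((FL_hasDerivAt (y - 2*(n:ℝ) - 1)).comp y h2)
  simp only [Function.comp_def] at g1
  have heq : (fun x : ℝ => FL (x - 2*(n:ℝ)) - FL (x - 2*(n:ℝ) - 1)) = hfun n := rfl
  rw [show ((fun x : ℝ => FL (x - 2*(n:ℝ))) - fun x : ℝ => FL (x - 2*(n:ℝ) - 1)) = hfun n from heq] at g1
  refine g1.congr_deriv ?_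
  unfold hfun
  push_cast
  rw [show 2*y - 2*(2*(n:ℝ)) = 2*(y - 2*n) by ring,
    show 2*y - 2*(2*(n:ℝ)+1) = 2*(y - 2*n - 1) by ring]
  ring

lemma sum_range_two_mul (g : ℕ → ℝ) (N : ℕ) :
    ∑ m ∈ Finset.range (2*N), g m = ∑ n ∈ Finset.range N, (g (2*n) + g (2*n+1)) := by
  induction N with
  | zero => simp
  | succ N ih =>
      have e : 2*(N+1) = (2*N+1)+1 := by ring
      rw [e, Finset.sum_range_succ, Finset.sum_range_succ, Finset.sum_range_succ, ih,
        add_assoc]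

lemma f_hasDerivAt (y : ℝ) : HasDerivAt f (2 * f (2*y)) y := by
  obtain ⟨N, hN⟩ := exists_nat_gt y
  have hy : y < 2*(N:ℝ) := two_le_cast N y hN
  have hsum : HasDerivAt (fun x => ∑ n ∈ Finset.range N, (u n : ℝ) * hfun n x)
      (∑ n ∈ Finset.range N,
        (u n : ℝ) * (2 * hfun (2*n) (2*y) - 2 * hfun (2*n+1) (2*y))) y :=
    HasDerivAt.fun_sum (fun n _ => (hfun_hasDerivAt n y).const_mul ((u n : ℝ)))
  have hf : HasDerivAt f (∑ n ∈ Finset.range N,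
      (u n : ℝ) * (2 * hfun (2*n) (2*y) - 2 * hfun (2*n+1) (2*y))) y :=
    hsum.congr_of_eventuallyEq (f_eventually_eq hy)
  have hval : (∑ n ∈ Finset.range N,
      (u n : ℝ) * (2 * hfun (2*n) (2*y) - 2 * hfun (2*n+1) (2*y))) = 2 * f (2*y) := by
    have h2y : 2*y < 2*((2*N : ℕ):ℝ) := by push_cast; linarith
    rw [f_eq_finsum (2*N) (2*y) h2y, sum_range_two_mul]
    rw [Finset.mul_sum]
    apply Finset.sum_congr rfl
    intro n _
    rw [u_two_mul, u_two_mul_add_one]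
    push_cast
    ring
  rw [hval] at hf
  exact hf

lemma f_zero : f 0 = 0 := f_nonpos_zero le_rfl

lemma f_integral (X : ℝ) : (∫ x in (0:ℝ)..X, f x) = f (X/2) := by
  have hg : ∀ Y : ℝ, HasDerivAt (fun X => (∫ x in (0:ℝ)..X, f x) - f (X/2)) 0 Y := by
    intro Y
    have h1 : HasDerivAt (fun X : ℝ => ∫ x in (0:ℝ)..X, f x) (f Y) Y :=
      primitive_hasDerivAt f_continuous Y
    have hhalf : HasDerivAt (fun X : ℝ => X/2) (1/2 : ℝ) Y := by
      simpa using (hasDerivAt_id Y).div_const 2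
    have h2 : HasDerivAt (fun X : ℝ => f (X/2)) (2 * f (2*(Y/2)) * (1/2)) Y :=
      by have := (f_hasDerivAt (Y/2)).comp Y hhalf; exact this
    have e : 2*(Y/2) = Y := by ring
    rw [e] at h2
    have h3 : HasDerivAt (fun X => (∫ x in (0:ℝ)..X, f x) - f (X/2))
        (f Y - 2 * f Y * (1/2)) Y := h1.sub h2
    convert h3 using 1
    ring
  have hconst := is_const_of_deriv_eq_zero
    (f := fun X : ℝ => (∫ x in (0:ℝ)..X, f x) - f (X/2))
    (fun Z => (hg Z).differentiableAt) (fun Z => (hg Z).deriv) X 0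
  simp only [intervalIntegral.integral_same] at hconst
  have hz : f ((0:ℝ)/2) = 0 := by norm_num [f_zero]
  rw [hz] at hconst
  linarith [hconst]

end TMF

theorem exists_thue_morse_solution :
    ∃ f : ℝ → ℝ, Continuous f ∧ (∀ x : ℝ, f x ∈ Set.Icc (-1 : ℝ) 1) ∧
      (∀ X : ℝ, (∫ x in (0 : ℝ)..X, f x) + f 0 = f (X / 2)) ∧
      (∀ n : ℕ, f (2 * n + 1) = (u n : ℝ) ∧ f (2 * n) = 0) ∧
      (∀ x : ℝ, x < 0 → f x = 0) ∧
      (∀ x : ℝ, 0 < x → |f x| = |f (x + 2)|) := by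
  refine ⟨TMF.f, TMF.f_continuous, ?_, ?_, ?_, ?_, ?_⟩
  · -- range in [-1, 1]
    intro x
    rcases le_or_gt x 0 with hx | hx
    · rw [TMF.f_nonpos_zero hx]
      constructor <;> norm_num
    · set n₀ := ⌊x/2⌋₊ with hn₀
      have hfl : (n₀:ℝ) ≤ x/2 := Nat.floor_le (by positivity)
      have hfl2 : x/2 < (n₀:ℝ) + 1 := Nat.lt_floor_add_one (x/2)
      have h1 : 2*(n₀:ℝ) ≤ x := by linarith
      have h2 : x ≤ 2*(n₀:ℝ) + 2 := by linarith
      rw [TMF.f_eq_single h1 h2]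
      have habs : |(u n₀ : ℝ) * TMF.hfun n₀ x| ≤ 1 := by
        rw [abs_mul, TMF.u_abs, one_mul]
        exact TMF.hfun_abs_le n₀ x
      rw [abs_le] at habs
      exact ⟨habs.1, habs.2⟩
  · -- integral equation
    intro X
    rw [TMF.f_zero, add_zero, TMF.f_integral]
  · -- values at integers
    intro n
    constructor
    · have h1 : 2*(n:ℝ) ≤ 2*(n:ℝ)+1 := by linarith
      have h2 : 2*(n:ℝ)+1 ≤ 2*(n:ℝ)+2 := by linarith
      rw [TMF.f_eq_single h1 h2]
      rw [TMF.hfun, show (2*(n:ℝ)+1) - 2*(n:ℝ) = 1 by ring,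
        TMF.FL_eq_one le_rfl, TMF.FL_eq_zero (by norm_num : (1:ℝ) - 1 ≤ 0)]
      ring
    · have h1 : 2*(n:ℝ) ≤ 2*(n:ℝ) := le_rfl
      have h2 : 2*(n:ℝ) ≤ 2*(n:ℝ)+2 := by linarith
      rw [TMF.f_eq_single h1 h2]
      rw [TMF.hfun, show 2*(n:ℝ) - 2*(n:ℝ) = 0 by ring,
        TMF.FL_eq_zero le_rfl, TMF.FL_eq_zero (by norm_num : (0:ℝ) - 1 ≤ 0)]
      ring
  · -- zero on negatives
    intro x hx
    exact TMF.f_nonpos_zero hx.le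
  · -- modulus 2-periodicity
    intro x hx
    set n₀ := ⌊x/2⌋₊ with hn₀
    have hfl : (n₀:ℝ) ≤ x/2 := Nat.floor_le (by positivity)
    have hfl2 : x/2 < (n₀:ℝ) + 1 := Nat.lt_floor_add_one (x/2)
    have h1 : 2*(n₀:ℝ) ≤ x := by linarith
    have h2 : x ≤ 2*(n₀:ℝ) + 2 := by linarith
    have h1' : 2*((n₀+1 : ℕ):ℝ) ≤ x + 2 := by push_cast; linarith
    have h2' : x + 2 ≤ 2*((n₀+1 : ℕ):ℝ) + 2 := by push_cast; linarith
    rw [TMF.f_eq_single h1 h2, TMF.f_eq_single h1' h2']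
    have hh : TMF.hfun (n₀+1) (x+2) = TMF.hfun n₀ x := by
      rw [TMF.hfun, TMF.hfun]
      push_cast
      rw [show x + 2 - 2*((n₀:ℝ)+1) = x - 2*n₀ by ring]
    rw [hh, abs_mul, abs_mul, TMF.u_abs, TMF.u_abs]

end ThueMorseFabius
end

section
/- For every integer n ≥ 1, every integer k ≥ 0, and every l with 0 ≤ l ≤ 2^n − 1, one has Σ^{2^n k + l}_n = −u_k · Σ^l_n. In particular, Σ^{2^n k}_n = 0 for every k. -/
/-- The "Pascal triangle" associated to the Thue–Morse sequence:
`Sig k n` is `Σ^k_n` (k the superscript, n the subscript). -/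
def Sig : ℕ → ℕ → ℤ
  | k, 0 => u k
  | 0, _ + 1 => 0
  | k + 1, n + 1 => Sig k n + Sig k (n + 1)

lemma u_zero : u 0 = -1 := by simp [u]
lemma u_one : u 1 = 1 := by norm_num [u]

lemma u_odd (k : ℕ) : u (2 * k + 1) = -u k := by
  have h1 : (2 * k + 1) % 2 = 1 := by omega
  have h2 : (2 * k + 1) / 2 = k := by omega
  have h : Nat.digits 2 (2 * k + 1) = 1 :: Nat.digits 2 k := by
    rw [Nat.digits_def' (by norm_num : (1:ℕ) < 2) (by omega), h1, h2]
  simp only [u, h, List.sum_cons, pow_succ, pow_add]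
  ring

lemma u_even (k : ℕ) : u (2 * k) = u k := by
  rcases Nat.eq_zero_or_pos k with hk | hk
  · simp [hk]
  have h1 : (2 * k) % 2 = 0 := by omega
  have h2 : (2 * k) / 2 = k := by omega
  have h : Nat.digits 2 (2 * k) = 0 :: Nat.digits 2 k := by
    rw [Nat.digits_def' (by norm_num : (1:ℕ) < 2) (by omega), h1, h2]
  simp only [u, h, List.sum_cons, Nat.zero_add]

lemma sig_zero_succ (n : ℕ) : Sig 0 (n + 1) = 0 := rfl
lemma sig_succ (k n : ℕ) : Sig (k + 1) (n + 1) = Sig k n + Sig k (n + 1) := rfl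
lemma sig_k_zero (k : ℕ) : Sig k 0 = u k := by cases k <;> rfl

lemma sig_one_one : Sig 1 1 = -1 := by
  rw [sig_succ, sig_k_zero, sig_zero_succ, u_zero]; ring

lemma sig_one (k : ℕ) : Sig (2 * k) 1 = 0 ∧ Sig (2 * k + 1) 1 = u k := by
  induction k with
  | zero =>
    refine ⟨rfl, ?_⟩
    show Sig 1 1 = u 0
    rw [sig_one_one, u_zero]
  | succ k ih =>
    have h1 : 2 * (k + 1) = (2 * k + 1) + 1 := by ring
    have he : Sig (2 * (k + 1)) 1 = 0 := by
      rw [h1, sig_succ, sig_k_zero, u_odd, ih.2]; ring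
    refine ⟨he, ?_⟩
    rw [sig_succ, sig_k_zero, he, u_even]; ring

lemma key : ∀ n, ∀ k l : ℕ, l < 2 ^ (n + 1) →
    Sig (2 ^ (n + 1) * k + l) (n + 1) = -(u k) * Sig l (n + 1) := by
  intro n
  induction n with
  | zero =>
    intro k l hl
    have hp : (2:ℕ) ^ (0 + 1) = 2 := by norm_num
    interval_cases l
    · rw [hp, Nat.add_zero, (sig_one k).1, sig_zero_succ]; ring
    · rw [hp, (sig_one k).2, sig_one_one]; ring
  | succ n ih =>
    -- step lemma
    have step : ∀ M b : ℕ, b ≤ 2 ^ (n + 1) →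
        Sig (2 ^ (n + 1) * M + b) (n + 2) =
          Sig (2 ^ (n + 1) * M) (n + 2) - u M * Sig b (n + 2) := by
      intro M b
      induction b with
      | zero => intro _; rw [sig_zero_succ]; ring
      | succ b ihb =>
        intro hb
        have hb' : b < 2 ^ (n + 1) := by omega
        rw [show 2 ^ (n + 1) * M + (b + 1) = (2 ^ (n + 1) * M + b) + 1 from rfl,
          sig_succ, sig_succ, ih M b hb', ihb (le_of_lt hb')]
        ring
    set C := Sig (2 ^ (n + 1)) (n + 2) with hC
    have T : ∀ M : ℕ, Sig (2 ^ (n + 1) * M) (n + 2) = -(Sig M 1) * C := by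
      intro M
      induction M with
      | zero => simp [sig_zero_succ]
      | succ M ihM =>
        have h2 : 2 ^ (n + 1) * (M + 1) = 2 ^ (n + 1) * M + 2 ^ (n + 1) := by ring
        rw [h2, step M (2 ^ (n + 1)) le_rfl, ihM, ← hC, sig_succ, sig_k_zero]
        ring
    intro k l hl
    have h2 : (2 : ℕ) ^ (n + 2) = 2 ^ (n + 1) * 2 := by ring
    rcases lt_or_ge l (2 ^ (n + 1)) with hcase | hcase
    · have hk2 : 2 ^ (n + 2) * k = 2 ^ (n + 1) * (2 * k) := by ring
      rw [hk2, step (2 * k) l (le_of_lt hcase), T, (sig_one k).1, u_even]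
      ring
    · obtain ⟨b, rfl⟩ : ∃ b, l = 2 ^ (n + 1) + b := ⟨l - 2 ^ (n + 1), by omega⟩
      have hb : b < 2 ^ (n + 1) := by
        have : (2:ℕ) ^ (n + 2) = 2 ^ (n + 1) + 2 ^ (n + 1) := by ring
        omega
      have hk2 : 2 ^ (n + 2) * k + (2 ^ (n + 1) + b) =
          2 ^ (n + 1) * (2 * k + 1) + b := by ring
      have hl2 : 2 ^ (n + 1) + b = 2 ^ (n + 1) * 1 + b := by ring
      rw [hk2, step (2 * k + 1) b (le_of_lt hb), T, (sig_one k).2, u_odd,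
        hl2, step 1 b (le_of_lt hb), T, sig_one_one, u_one]
      ring

theorem sig_column_periodicity (n : ℕ) (hn : 1 ≤ n) :
    (∀ k l : ℕ, l ≤ 2 ^ n - 1 → Sig (2 ^ n * k + l) n = -(u k) * Sig l n) ∧
    (∀ k : ℕ, Sig (2 ^ n * k) n = 0) := by
  obtain ⟨m, rfl⟩ : ∃ m, n = m + 1 := ⟨n - 1, by omega⟩
  have hmain : ∀ k l : ℕ, l ≤ 2 ^ (m + 1) - 1 →
      Sig (2 ^ (m + 1) * k + l) (m + 1) = -(u k) * Sig l (m + 1) := by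
    intro k l hl
    exact key m k l (by have := Nat.one_le_two_pow (n := m + 1); omega)
  refine ⟨hmain, fun k => ?_⟩
  have := hmain k 0 (by omega)
  simpa [sig_zero_succ] using this
end

section
/- For every integer n ≥ 1, the finite sequence l ↦ −Σ^l_{n+1} is nondecreasing for l ∈ {0, 1, …, 2^n}: that is, for every l with 0 ≤ l < 2^n, one has −Σ^{l}_{n+1} ≤ −Σ^{l+1}_{n+1}. -/
lemma u_two_mul (j : ℕ) : u (2 * j) = u j := by
  rcases Nat.eq_zero_or_pos j with h | h
  · subst h; rfl
  · unfold u
    rw [Nat.digits_def' (by norm_num : (1:ℕ) < 2) (by omega : 0 < 2 * j)]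
    simp [Nat.mul_div_cancel_left, Nat.mul_mod_right]

lemma u_two_mul_add_one (j : ℕ) : u (2 * j + 1) = -u j := by
  unfold u
  rw [Nat.digits_def' (by norm_num : (1:ℕ) < 2) (by omega : 0 < 2 * j + 1)]
  have h1 : (2 * j + 1) % 2 = 1 := by omega
  have h2 : (2 * j + 1) / 2 = j := by omega
  rw [h1, h2]
  simp [pow_succ, pow_add]

lemma u_add_pow : ∀ m k : ℕ, k < 2 ^ m → u (k + 2 ^ m) = -u k := by
  intro m
  induction m with
  | zero =>
    intro k hk
    interval_cases k
    · show u 1 = -u 0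
      unfold u
      norm_num
  | succ m ih =>
    intro k hk
    rcases Nat.even_or_odd k with ⟨j, hj⟩ | ⟨j, hj⟩
    · have hj2 : j < 2 ^ m := by
        rw [pow_succ] at hk; omega
      have : k + 2 ^ (m + 1) = 2 * (j + 2 ^ m) := by rw [pow_succ]; omega
      rw [this, u_two_mul, ih j hj2, hj,
        (by ring : j + j = 2 * j), u_two_mul]
    · have hj2 : j < 2 ^ m := by
        rw [pow_succ] at hk; omega
      have : k + 2 ^ (m + 1) = 2 * (j + 2 ^ m) + 1 := by rw [pow_succ]; omega
      rw [this, u_two_mul_add_one, ih j hj2, hj, u_two_mul_add_one]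

lemma sig_eq_sum (k n : ℕ) : Sig k (n + 1) = ∑ j ∈ Finset.range k, Sig j n := by
  induction k with
  | zero => simp [Sig]
  | succ k ih => rw [Finset.sum_range_succ, ← ih]; show Sig k n + Sig k (n+1) = _; ring

lemma sig_antiperiod : ∀ n m : ℕ, n ≤ m → ∀ k, k < 2 ^ m → Sig (k + 2 ^ m) n = -Sig k n := by
  intro n
  induction n with
  | zero =>
    intro m _ k hk
    simp only [Sig]
    exact u_add_pow m k hk
  | succ n ih =>
    intro m hm k hk
    obtain ⟨m', rfl⟩ : ∃ m', m = m' + 1 := ⟨m - 1, by omega⟩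
    have hnm' : n ≤ m' := by omega
    have hsum0 : ∑ j ∈ Finset.range (2 ^ (m' + 1)), Sig j n = 0 := by
      have : (2 : ℕ) ^ (m' + 1) = 2 ^ m' + 2 ^ m' := by rw [pow_succ]; ring
      rw [this, Finset.sum_range_add]
      have : ∀ x ∈ Finset.range (2 ^ m'), Sig (2 ^ m' + x) n = -Sig x n := by
        intro x hx
        rw [Finset.mem_range] at hx
        rw [add_comm]
        exact ih m' hnm' x hx
      rw [Finset.sum_congr rfl this]
      simp
    rw [add_comm k (2 ^ (m' + 1)), sig_eq_sum, sig_eq_sum, Finset.sum_range_add, hsum0,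
      zero_add]
    have : ∀ x ∈ Finset.range k, Sig (2 ^ (m' + 1) + x) n = -Sig x n := by
      intro x hx
      rw [Finset.mem_range] at hx
      rw [add_comm]
      exact ih (m' + 1) (by omega) x (by omega)
    rw [Finset.sum_congr rfl this, Finset.sum_neg_distrib]

lemma sig_nonpos : ∀ n : ℕ, 1 ≤ n → ∀ l, l ≤ 2 ^ n → Sig l n ≤ 0 := by
  intro n
  induction n with
  | zero => omega
  | succ n ih =>
    intro _ l hl
    rcases Nat.eq_zero_or_pos n with rfl | hn
    · -- n + 1 = 1, l ≤ 2
      norm_num at hl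
      interval_cases l <;> norm_num [Sig, u]
    · rw [sig_eq_sum]
      rcases le_or_gt l (2 ^ n) with h | h
      · apply Finset.sum_nonpos
        intro j hj
        rw [Finset.mem_range] at hj
        exact ih hn j (by omega)
      · obtain ⟨r, rfl⟩ : ∃ r, l = 2 ^ n + r := ⟨l - 2 ^ n, by omega⟩
        have hr : r ≤ 2 ^ n := by
          rw [pow_succ] at hl; omega
        rw [Finset.sum_range_add]
        have : ∀ x ∈ Finset.range r, Sig (2 ^ n + x) n = -Sig x n := by
          intro x hx
          rw [Finset.mem_range] at hx
          rw [add_comm]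
          exact sig_antiperiod n n le_rfl x (by omega)
        rw [Finset.sum_congr rfl this, Finset.sum_neg_distrib]
        have := Finset.sum_Ico_eq_sub (fun j => Sig j n) hr
        rw [← sub_eq_add_neg, ← this]
        apply Finset.sum_nonpos
        intro j hj
        rw [Finset.mem_Ico] at hj
        exact ih hn j (by omega)

theorem sig_column_monotone (n : ℕ) (hn : 1 ≤ n) (l : ℕ) (hl : l < 2 ^ n) :
    -Sig l (n + 1) ≤ -Sig (l + 1) (n + 1) := by
  have h : Sig (l + 1) (n + 1) = Sig l n + Sig l (n + 1) := rfl
  have h2 : Sig l n ≤ 0 := sig_nonpos n hn l (by omega)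
  rw [h]
  linarith
end

section
/- If f, g : ℝ → ℝ are continuous, both satisfy the equation ∫₀^X h(x) dx + h(0) = h(X/2) for every real X (with h = f and h = g respectively), and there exists ε > 0 such that f(x) = g(x) for all x ∈ (−ε, ε), then f = g on all of ℝ. -/
theorem solutions_equal_of_eq_near_zero (f g : ℝ → ℝ) (hf : Continuous f) (hg : Continuous g)
    (heqf : ∀ X : ℝ, (∫ x in (0 : ℝ)..X, f x) + f 0 = f (X / 2))
    (heqg : ∀ X : ℝ, (∫ x in (0 : ℝ)..X, g x) + g 0 = g (X / 2))
    (hloc : ∃ ε : ℝ, 0 < ε ∧ ∀ x ∈ Set.Ioo (-ε) ε, f x = g x) :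
    f = g := by
  obtain ⟨ε, hε, hloc⟩ := hloc
  set d : ℝ → ℝ := fun x => f x - g x with hd
  have hdc : Continuous d := hf.sub hg
  have hf0g0 : f 0 = g 0 := hloc 0 ⟨by linarith, hε⟩
  have hkey : ∀ y : ℝ, d y = ∫ t in (0:ℝ)..(2*y), d t := by
    intro y
    have h1 := heqf (2*y); have h2 := heqg (2*y)
    have hint : (∫ t in (0:ℝ)..(2*y), d t)
        = (∫ t in (0:ℝ)..(2*y), f t) - ∫ t in (0:ℝ)..(2*y), g t :=
      intervalIntegral.integral_sub (hf.intervalIntegrable _ _) (hg.intervalIntegrable _ _)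
    have h3 : (2*y)/2 = y := by ring
    rw [h3] at h1 h2
    rw [hint]
    simp only [d]
    linarith
  have hderiv : ∀ y : ℝ, HasDerivAt d (2 * d (2*y)) y := by
    intro y
    have hG : HasDerivAt (fun u => ∫ t in (0:ℝ)..u, d t) (d (2*y)) (2*y) :=
      (hdc.integral_hasStrictDerivAt 0 (2*y)).hasDerivAt
    have h2 : HasDerivAt (fun z : ℝ => 2*z) 2 y := by
      simpa using (hasDerivAt_id y).const_mul (2:ℝ)
    have hc := hG.comp y h2
    have hF : HasDerivAt (fun z => ∫ t in (0:ℝ)..(2*z), d t) (2 * d (2*y)) y := by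
      have hc' : HasDerivAt (fun z : ℝ => ∫ t in (0:ℝ)..(2*z), d t) (d (2*y) * 2) y := hc
      simpa [mul_comm] using hc'
    exact hF.congr_of_eventuallyEq (Filter.Eventually.of_forall hkey)
  have main : ∀ n : ℕ, ∀ x : ℝ, |x| < 2^n * ε → d x = 0 := by
    intro n
    induction n with
    | zero =>
      intro x hx
      simp only [pow_zero, one_mul] at hx
      obtain ⟨h1, h2⟩ := abs_lt.mp hx
      simp only [d, sub_eq_zero]
      exact hloc x ⟨h1, h2⟩
    | succ n ih =>
      intro x hx
      have hRpos : (0:ℝ) < 2^n * ε := by positivity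
      have hy : |x/2| < 2^n * ε := by
        rw [abs_div]
        rw [pow_succ] at hx
        rw [abs_of_pos (by norm_num : (0:ℝ) < 2)]
        linarith [hx]
      have hzero : HasDerivAt d 0 (x/2) := by
        have hmem : Set.Ioo (-(2^n*ε)) (2^n*ε) ∈ nhds (x/2) := by
          apply Ioo_mem_nhds
          · linarith [(abs_lt.mp hy).1]
          · linarith [(abs_lt.mp hy).2]
        have hev : d =ᶠ[nhds (x/2)] (fun _ => 0) := by
          filter_upwards [hmem] with z hz
          exact ih z (abs_lt.mpr ⟨hz.1, hz.2⟩)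
        have h0 : HasDerivAt (fun _ : ℝ => (0:ℝ)) 0 (x/2) := hasDerivAt_const _ _
        exact h0.congr_of_eventuallyEq hev
      have hD := hderiv (x/2)
      rw [show 2*(x/2) = x by ring] at hD
      have := hD.unique hzero
      linarith
  funext x
  have : ∃ n : ℕ, |x| / ε < 2 ^ n := pow_unbounded_of_one_lt _ (by norm_num)
  obtain ⟨n, hn⟩ := this
  have hx : |x| < 2^n * ε := by
    rw [div_lt_iff₀ hε] at hn
    linarith
  have := main n x hx
  simp only [d, sub_eq_zero] at this
  exact this
end
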